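/- arXiv:2208.05043 — 2 statements merged into one kernel-verified Lean document; each statement's English description precedes it below -/
import Mathlib

section
/- For every m > 0, the supremum over x < 0 of m*x + log(1 - exp(x)) equals m*log(m) - (1 + m)*log(1 + m). -/
theorem stmt_4 (m : ℝ) (hm : 0 < m) :
    sSup ((fun x : ℝ => m * x + Real.log (1 - Real.exp x)) '' {x : ℝ | x < 0}) =
      m * Real.log m - (1 + m) * Real.log (1 + m) := by
  have hm1 : (0:ℝ) < 1 + m := by linarith
  apply IsGreatest.csSup_eq
  constructor
  · refine ⟨Real.log (m / (1 + m)), ?_, ?_⟩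
    · show Real.log (m / (1 + m)) < 0
      apply Real.log_neg (by positivity)
      rw [div_lt_one hm1]; linarith
    · simp only
      rw [Real.exp_log (by positivity)]
      have h1 : 1 - m / (1 + m) = 1 / (1 + m) := by field_simp; ring
      rw [h1, Real.log_div hm.ne' hm1.ne', Real.log_div one_ne_zero hm1.ne', Real.log_one]
      ring
  · rintro y ⟨x, hx, rfl⟩
    simp only [Set.mem_setOf_eq] at hx
    set t := Real.exp x with ht
    have ht0 : 0 < t := Real.exp_pos x
    have ht1 : t < 1 := Real.exp_lt_one_iff.mpr hx
    have hx' : x = Real.log t := (Real.log_exp x).symm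
    have h1 : Real.log (t * (1 + m) / m) ≤ t * (1 + m) / m - 1 :=
      Real.log_le_sub_one_of_pos (by positivity)
    have h1' : m * Real.log (t * (1 + m) / m) ≤ t * (1 + m) - m := by
      have := mul_le_mul_of_nonneg_left h1 hm.le
      have heq : m * (t * (1 + m) / m - 1) = t * (1 + m) - m := by field_simp
      linarith [heq ▸ this]
    have h2 : Real.log ((1 - t) * (1 + m)) ≤ (1 - t) * (1 + m) - 1 :=
      Real.log_le_sub_one_of_pos (mul_pos (by linarith) hm1)
    have e1 : Real.log (t * (1 + m) / m) = Real.log t + Real.log (1 + m) - Real.log m := by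
      rw [Real.log_div (by positivity) hm.ne', Real.log_mul ht0.ne' hm1.ne']
    have e1' : m * Real.log (t * (1 + m) / m)
        = m * Real.log t + m * Real.log (1 + m) - m * Real.log m := by rw [e1]; ring
    have e2 : Real.log ((1 - t) * (1 + m)) = Real.log (1 - t) + Real.log (1 + m) := by
      rw [Real.log_mul (by linarith) hm1.ne']
    have e3 : (1 + m) * Real.log (1 + m) = m * Real.log (1 + m) + Real.log (1 + m) := by ring
    show m * x + Real.log (1 - t) ≤ _
    rw [hx']
    nlinarith [h1', h2, e1', e2, e3]
end

section
/- Let f1, f2 : ℝ → ℝ be convex functions and define the infimal convolution h(x) = inf_t (f1(x - t) + f2(t)). Then for every m, sup_x (m*x - h(x)) = sup_x (m*x - f1(x)) + sup_x (m*x - f2(x)), where all quantities are interpreted in the extended reals. -/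
noncomputable def addRealIso (r : ℝ) : EReal ≃o EReal where
  toFun a := (r : EReal) + a
  invFun a := a + ((-r : ℝ) : EReal)
  left_inv a := by
    induction a using EReal.rec
    · simp
    · simp only [← EReal.coe_add]; norm_num
    · simp
  right_inv a := by
    induction a using EReal.rec
    · simp
    · simp only [← EReal.coe_add]; norm_num
    · simp
  map_rel_iff' := by
    intro a b
    constructor
    · intro h; simp only [Equiv.coe_fn_mk] at h ⊢
      by_contra hlt
      exact absurd h (not_le.2 (EReal.add_lt_add_left_coe (not_le.1 hlt) r))
    · intro h; simp only [Equiv.coe_fn_mk] at h ⊢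
      exact add_le_add le_rfl h

lemma real_add_iSup {ι : Sort*} (r : ℝ) (g : ι → EReal) :
    (r : EReal) + ⨆ i, g i = ⨆ i, ((r : EReal) + g i) :=
  (addRealIso r).map_iSup g

lemma ereal_neg_iInf {ι : Sort*} (g : ι → EReal) : -(⨅ i, g i) = ⨆ i, -(g i) := by
  apply le_antisymm
  · rw [EReal.neg_le]
    exact le_iInf fun i => EReal.neg_le.mp (le_iSup (fun i => -(g i)) i)
  · exact iSup_le fun i => EReal.neg_le_neg_iff.mpr (iInf_le _ i)

lemma ereal_iSup_add_iSup (a b : ℝ → ℝ) :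
    (⨆ u, ((a u : ℝ) : EReal)) + ⨆ t, ((b t : ℝ) : EReal) =
      ⨆ u, ⨆ t, ((a u + b t : ℝ) : EReal) := by
  apply le_antisymm
  · apply EReal.add_le_of_forall_lt
    intro a' ha' b' hb'
    obtain ⟨u, hu⟩ := lt_iSup_iff.mp ha'
    obtain ⟨t, ht⟩ := lt_iSup_iff.mp hb'
    calc a' + b' ≤ ((a u : ℝ) : EReal) + ((b t : ℝ) : EReal) := add_le_add hu.le ht.le
    _ = ((a u + b t : ℝ) : EReal) := (EReal.coe_add _ _).symm
    _ ≤ _ := le_iSup₂ (f := fun u t => ((a u + b t : ℝ) : EReal)) u t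
  · refine iSup₂_le fun u t => ?_
    rw [EReal.coe_add]
    exact add_le_add (le_iSup (fun u => ((a u : ℝ) : EReal)) u)
      (le_iSup (fun t => ((b t : ℝ) : EReal)) t)

theorem stmt_16 (f₁ f₂ : ℝ → ℝ) (hf₁ : ConvexOn ℝ Set.univ f₁)
    (hf₂ : ConvexOn ℝ Set.univ f₂) (m : ℝ) :
    (⨆ x : ℝ, (((m * x : ℝ) : EReal) - ⨅ t : ℝ, ((f₁ (x - t) + f₂ t : ℝ) : EReal))) =
      (⨆ x : ℝ, ((m * x - f₁ x : ℝ) : EReal)) + ⨆ x : ℝ, ((m * x - f₂ x : ℝ) : EReal) := by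
  have hsub : ∀ x : ℝ,
      (((m * x : ℝ) : EReal) - ⨅ t : ℝ, ((f₁ (x - t) + f₂ t : ℝ) : EReal)) =
        ⨆ t : ℝ, ((m * x - (f₁ (x - t) + f₂ t) : ℝ) : EReal) := by
    intro x
    rw [sub_eq_add_neg, ereal_neg_iInf, real_add_iSup]
    refine iSup_congr fun t => ?_
    rw [← EReal.coe_neg, ← EReal.coe_add]
    norm_num [sub_eq_add_neg]
  simp only [hsub]
  rw [ereal_iSup_add_iSup (fun u => m * u - f₁ u) (fun t => m * t - f₂ t)]
  rw [iSup_comm]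
  rw [iSup_comm (f := fun u t => ((m * u - f₁ u + (m * t - f₂ t) : ℝ) : EReal))]
  refine iSup_congr fun t => ?_
  have : (fun x : ℝ => ((m * x - (f₁ (x - t) + f₂ t) : ℝ) : EReal)) =
      (fun u : ℝ => ((m * u - f₁ u + (m * t - f₂ t) : ℝ) : EReal)) ∘ (fun x => x - t) := by
    funext x
    simp only [Function.comp_apply]
    congr 1
    ring
  rw [this]
  exact Function.Surjective.iSup_comp (g := fun u : ℝ => ((m * u - f₁ u + (m * t - f₂ t) : ℝ) : EReal)) (Equiv.subRight t).surjective
end
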